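/- For the 2-dimensional DDAE with E = [[1,0],[0,0]], A = [[0,1],[1,0]], D = [[0,0],[0,−1]], f ≡ 0, τ = 1, and history φ(t) = ((t−1)³/3 + (t−1)² − 1, t³/3 + t² − 1), the second component of any solution satisfies x₂(t) = t² − 1 on [0,1], x₂(t) = 2t − 2 on [1,2], x₂(t) = 2 on (2,3), and x₂(t) = 0 for t ≥ 3; in particular the solution is discontinuous at t = 3. -/

import Mathlib

open Set Filter

/-- If `x · 0` agrees with `g` on `[t, b)` and `g` has derivative `g'` at `t`, then the
one-sided derivative condition forces `x t 1 = g'`. -/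
lemma ddae_step_aux (x : ℝ → Fin 2 → ℝ) (t : ℝ)
    (hode : HasDerivWithinAt (fun s => x s 0) (x t 1) (Set.Ici t) t)
    (g : ℝ → ℝ) (g' : ℝ) (hg : HasDerivAt g g' t)
    (b : ℝ) (htb : t < b)
    (heq : ∀ s, t ≤ s → s < b → x s 0 = g s) :
    x t 1 = g' := by
  have hev : g =ᶠ[nhdsWithin t (Set.Ici t)] (fun s => x s 0) := by
    filter_upwards [mem_nhdsWithin_of_mem_nhds (Iio_mem_nhds htb),
      self_mem_nhdsWithin] with s hs1 hs2
    exact (heq s hs2 hs1).symm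
  have h2 : HasDerivWithinAt g (x t 1) (Set.Ici t) t :=
    hode.congr_of_eventuallyEq hev (heq t le_rfl htb).symm
  have u := uniqueDiffOn_Ici t t Set.self_mem_Ici
  have a := h2.derivWithin u
  have b := (hg.hasDerivWithinAt (s := Set.Ici t)).derivWithin u
  rw [← a, b]

theorem example_advanced_type (x : ℝ → Fin 2 → ℝ)
    (hist : ∀ t ∈ Set.Icc (-1 : ℝ) 0,
      x t = ![(t - 1) ^ 3 / 3 + (t - 1) ^ 2 - 1, t ^ 3 / 3 + t ^ 2 - 1])
    (halg : ∀ t : ℝ, 0 ≤ t → x t 0 = x (t - 1) 1)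
    (hode : ∀ t : ℝ, 0 ≤ t → HasDerivWithinAt (fun s => x s 0) (x t 1) (Set.Ici t) t) :
    (∀ t ∈ Set.Icc (0 : ℝ) 1, x t 1 = t ^ 2 - 1) ∧
    (∀ t ∈ Set.Icc (1 : ℝ) 2, x t 1 = 2 * t - 2) ∧
    (∀ t ∈ Set.Ioo (2 : ℝ) 3, x t 1 = 2) ∧
    (∀ t : ℝ, 3 ≤ t → x t 1 = 0) ∧
    ¬ ContinuousAt (fun t => x t 1) 3 := by
  -- x·0 on [0,1]
  have hx0a : ∀ t : ℝ, 0 ≤ t → t ≤ 1 → x t 0 = (t-1)^3/3 + (t-1)^2 - 1 := by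
    intro t h0 h1
    rw [halg t h0]
    have := congrFun (hist (t-1) ⟨by linarith, by linarith⟩) 1
    simpa using this
  -- x·1 on [0,1)
  have hx1a : ∀ t : ℝ, 0 ≤ t → t < 1 → x t 1 = t^2 - 1 := by
    intro t h0 h1
    have hg : HasDerivAt (fun s : ℝ => (s-1)^3/3 + (s-1)^2 - 1) (t^2 - 1) t := by
      have h := (((((hasDerivAt_id t).sub_const 1).pow 3).div_const 3).add
        (((hasDerivAt_id t).sub_const 1).pow 2)).sub_const 1
      convert h using 1
      · rfl
      · rfl
      · rfl
      simp only [id]; push_cast; ring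
    exact ddae_step_aux x t (hode t h0) _ _ hg 1 h1
      (fun s hs1 hs2 => hx0a s (h0.trans hs1) hs2.le)
  -- x·0 on [1,2)
  have hx0b : ∀ t : ℝ, 1 ≤ t → t < 2 → x t 0 = (t-1)^2 - 1 := by
    intro t h1 h2
    rw [halg t (by linarith), hx1a (t-1) (by linarith) (by linarith)]
  -- x·1 on [1,2)
  have hx1b : ∀ t : ℝ, 1 ≤ t → t < 2 → x t 1 = 2*t - 2 := by
    intro t h1 h2
    have hg : HasDerivAt (fun s : ℝ => (s-1)^2 - 1) (2*t - 2) t := by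
      have h := (((hasDerivAt_id t).sub_const 1).pow 2).sub_const 1
      convert h using 1
      · rfl
      · rfl
      · rfl
      simp only [id]; push_cast; ring
    exact ddae_step_aux x t (hode t (by linarith)) _ _ hg 2 h2
      (fun s hs1 hs2 => hx0b s (h1.trans hs1) hs2)
  -- x·0 on [2,3)
  have hx0c : ∀ t : ℝ, 2 ≤ t → t < 3 → x t 0 = 2*t - 4 := by
    intro t h1 h2
    rw [halg t (by linarith), hx1b (t-1) (by linarith) (by linarith)]
    ring
  -- x·1 on [2,3)
  have hx1c : ∀ t : ℝ, 2 ≤ t → t < 3 → x t 1 = 2 := by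
    intro t h1 h2
    have hg : HasDerivAt (fun s : ℝ => 2*s - 4) 2 t := by
      have h := (((hasDerivAt_id t).const_mul 2)).sub_const 4
      convert h using 1
      · rfl
      · rfl
      · rfl
      ring
    exact ddae_step_aux x t (hode t (by linarith)) _ _ hg 3 h2
      (fun s hs1 hs2 => hx0c s (h1.trans hs1) hs2)
  -- x·0 on [3,4)
  have hx0d : ∀ t : ℝ, 3 ≤ t → t < 4 → x t 0 = 2 := by
    intro t h1 h2
    rw [halg t (by linarith), hx1c (t-1) (by linarith) (by linarith)]
  -- x·1 = 0 on [3+n, 4+n) by induction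
  have hzero : ∀ n : ℕ, ∀ t : ℝ, 3 + (n:ℝ) ≤ t → t < 4 + (n:ℝ) → x t 1 = 0 := by
    intro n
    induction n with
    | zero =>
      intro t h1 h2
      simp only [Nat.cast_zero, add_zero] at h1 h2
      exact ddae_step_aux x t (hode t (by linarith)) _ _ (hasDerivAt_const t 2) 4 h2
        (fun s hs1 hs2 => hx0d s (h1.trans hs1) hs2)
    | succ n ih =>
      intro t h1 h2
      push_cast at h1 h2
      have hx0 : ∀ s : ℝ, t ≤ s → s < 4 + (n:ℝ) + 1 → x s 0 = 0 := by
        intro s hs1 hs2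
        rw [halg s (by linarith)]
        exact ih (s-1) (by linarith) (by linarith)
      exact ddae_step_aux x t (hode t (by linarith)) _ _ (hasDerivAt_const t 0)
        (4 + (n:ℝ) + 1) (by linarith) hx0
  have htail : ∀ t : ℝ, 3 ≤ t → x t 1 = 0 := by
    intro t ht
    have h0 : (0:ℝ) ≤ t - 3 := by linarith
    have hle : ((⌊t-3⌋₊ : ℝ)) ≤ t - 3 := Nat.floor_le h0
    have hlt : t - 3 < (⌊t-3⌋₊ : ℝ) + 1 := Nat.lt_floor_add_one _
    exact hzero ⌊t-3⌋₊ t (by linarith) (by linarith)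
  -- endpoints
  have h11 : x 1 1 = 0 := by have := hx1b 1 le_rfl (by norm_num); linarith
  have h21 : x 2 1 = 2 := by have := hx1c 2 le_rfl (by norm_num); linarith
  refine ⟨?_, ?_, ?_, htail, ?_⟩
  · rintro t ⟨h0, h1⟩
    rcases lt_or_eq_of_le h1 with h | h
    · exact hx1a t h0 h
    · subst h; simpa using h11
  · rintro t ⟨h1, h2⟩
    rcases lt_or_eq_of_le h2 with h | h
    · exact hx1b t h1 h
    · subst h; rw [h21]; norm_num
  · rintro t ⟨h2, h3⟩
    exact hx1c t h2.le h3
  · intro hcont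
    have h30 : x 3 1 = 0 := htail 3 le_rfl
    have h1 : Tendsto (fun t => x t 1) (nhdsWithin 3 (Set.Iio 3)) (nhds 0) := by
      rw [← h30]
      exact hcont.tendsto.mono_left nhdsWithin_le_nhds
    have h2 : Tendsto (fun t => x t 1) (nhdsWithin 3 (Set.Iio 3)) (nhds 2) := by
      have hev : (fun t => x t 1) =ᶠ[nhdsWithin 3 (Set.Iio 3)] (fun _ => 2) := by
        filter_upwards [Ioo_mem_nhdsLT_of_mem (by norm_num : (3:ℝ) ∈ Set.Ioc 2 3)]
          with s hs
        exact hx1c s hs.1.le hs.2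
      exact Filter.Tendsto.congr' hev.symm tendsto_const_nhds
    have : (0:ℝ) = 2 := tendsto_nhds_unique h1 h2
    norm_num at this
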